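/- Let ρ > 0, k ∈ [0,1] and γ = 0. Then: (i) the family π with π(2,1) = 1 and π(i,j) = 0 for all other states is a stationary distribution of the full flexibility system (it is nonnegative, sums to 1, and satisfies the full flexibility balance equations with γ = 0), and its throughput is T_fs(π) = 0; (ii) the family p with p(0,1) = 1/(ρ+1), p(1,1) = ρ/(ρ+1), and p(m,n) = 0 for all other states is a stationary distribution of the partial flexibility system (it is nonnegative, sums to 1, and satisfies the partial flexibility balance equations with γ = 0), and its throughput is T_ps(p) = ρ/(ρ+1); (iii) consequently T_fs(π) < T_ps(p) ≤ T_is, with T_ps(p) = T_is if and only if k = 0. -/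

import Mathlib

/-- The balance equations of the full flexibility system with parameters `ρ`, `k`, `γ`. -/
def FullBalance (ρ k γ : ℝ) (π : Fin 3 → Fin 3 → ℝ) : Prop :=
  (ρ + k*ρ) * π 0 0 = π 1 0 + γ * π 0 1 + π 0 2 + γ * π 2 0 ∧
  (ρ + k*ρ + 1) * π 1 0 = ρ * π 0 0 + γ * π 1 1 + π 1 2 ∧
  (ρ + k*ρ + γ) * π 2 0 = γ * π 2 1 + π 2 2 ∧
  (ρ + k*ρ + γ) * π 0 1 = π 1 1 + γ * π 2 1 ∧
  (1 + γ) * π 1 1 = ρ * π 1 0 + ρ * π 0 1 ∧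
  2 * γ * π 2 1 = ρ * π 2 0 + k*ρ * π 0 1 ∧
  (ρ + k*ρ + 1) * π 0 2 = k*ρ * π 0 0 + π 1 2 + γ * π 2 2 ∧
  2 * π 1 2 = ρ * π 0 2 + k*ρ * π 1 0 ∧
  (γ + 1) * π 2 2 = k*ρ * π 2 0 + k*ρ * π 0 2

/-- `π` is a stationary distribution of the full flexibility system. -/
def FullStationary (ρ k γ : ℝ) (π : Fin 3 → Fin 3 → ℝ) : Prop :=
  (∀ i j, 0 ≤ π i j) ∧ (∑ i : Fin 3, ∑ j : Fin 3, π i j) = 1 ∧ FullBalance ρ k γ π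

/-- Throughput of the full flexibility system. -/
noncomputable def Tfs (ρ k : ℝ) (π : Fin 3 → Fin 3 → ℝ) : ℝ :=
  (k + 1) * ρ * (1 - π 1 1 - π 1 2 - π 2 1 - π 2 2)

/-- The balance equations of the partial flexibility system with parameters `ρ`, `k`, `γ`. -/
def PartialBalance (ρ k γ : ℝ) (p : Fin 2 → Fin 3 → ℝ) : Prop :=
  (ρ + k*ρ) * p 0 0 = p 1 0 + γ * p 0 1 + p 0 2 ∧
  (ρ + k*ρ + 1) * p 1 0 = ρ * p 0 0 + γ * p 1 1 + p 1 2 ∧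
  2 * p 1 2 = ρ * p 0 2 + k*ρ * p 1 0 ∧
  (ρ + 1) * p 0 2 = k*ρ * p 0 0 + p 1 2 ∧
  (1 + γ) * p 1 1 = ρ * (p 0 1 + p 1 0) ∧
  (ρ + γ) * p 0 1 = p 1 1

/-- `p` is a stationary distribution of the partial flexibility system. -/
def PartialStationary (ρ k γ : ℝ) (p : Fin 2 → Fin 3 → ℝ) : Prop :=
  (∀ m n, 0 ≤ p m n) ∧ (∑ m : Fin 2, ∑ n : Fin 3, p m n) = 1 ∧ PartialBalance ρ k γ p

/-- Throughput of the partial flexibility system. -/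
noncomputable def Tps (ρ k : ℝ) (p : Fin 2 → Fin 3 → ℝ) : ℝ :=
  ρ * (1 - p 1 1 - p 1 2) + k*ρ * (1 - p 1 1 - p 1 2 - p 0 1 - p 0 2)

/-- Throughput of the independent system. -/
noncomputable def Tis (ρ k : ℝ) : ℝ := ρ/(ρ+1) + k*ρ/(k*ρ+1)

/-- when `γ = 0`, the indicated families are stationary distributions of the
full and partial flexibility systems, with throughputs `0` and `ρ/(ρ+1)` respectively, and
`T_fs < T_ps ≤ T_is` with equality iff `k = 0`. -/
theorem stmt_3 (ρ k : ℝ) (hρ : 0 < ρ) (hk : k ∈ Set.Icc (0:ℝ) 1) :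
    FullStationary ρ k 0 ![![0, 0, 0], ![0, 0, 0], ![0, 1, 0]] ∧
    Tfs ρ k ![![0, 0, 0], ![0, 0, 0], ![0, 1, 0]] = 0 ∧
    PartialStationary ρ k 0 ![![0, 1/(ρ+1), 0], ![0, ρ/(ρ+1), 0]] ∧
    Tps ρ k ![![0, 1/(ρ+1), 0], ![0, ρ/(ρ+1), 0]] = ρ/(ρ+1) ∧
    Tfs ρ k ![![0, 0, 0], ![0, 0, 0], ![0, 1, 0]] <
      Tps ρ k ![![0, 1/(ρ+1), 0], ![0, ρ/(ρ+1), 0]] ∧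
    Tps ρ k ![![0, 1/(ρ+1), 0], ![0, ρ/(ρ+1), 0]] ≤ Tis ρ k ∧
    (Tps ρ k ![![0, 1/(ρ+1), 0], ![0, ρ/(ρ+1), 0]] = Tis ρ k ↔ k = 0) := by
  have h1 : (0:ℝ) < ρ + 1 := by linarith
  have hk0 : 0 ≤ k := hk.1
  have hTps : Tps ρ k ![![0, 1/(ρ+1), 0], ![0, ρ/(ρ+1), 0]] = ρ/(ρ+1) := by
    simp [Tps, Matrix.vecHead, Matrix.vecTail]
    field_simp
    ring
  refine ⟨⟨?_, ?_, ?_⟩, ?_, ⟨?_, ?_, ?_⟩, hTps, ?_, ?_, ?_⟩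
  · intro i j; fin_cases i <;> fin_cases j <;> norm_num
  · simp [Fin.sum_univ_succ]
  · refine ⟨?_, ?_, ?_, ?_, ?_, ?_, ?_, ?_, ?_⟩ <;>
      simp [Matrix.vecHead, Matrix.vecTail]
  · simp [Tfs, Matrix.vecHead, Matrix.vecTail]
  · intro m n
    fin_cases m <;> fin_cases n <;> simp [Matrix.vecHead, Matrix.vecTail] <;> positivity
  · simp [Fin.sum_univ_succ, Matrix.vecHead, Matrix.vecTail]
    field_simp
    ring
  · refine ⟨?_, ?_, ?_, ?_, ?_, ?_⟩ <;> simp [Matrix.vecHead, Matrix.vecTail] <;>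
      field_simp <;> ring
  · rw [hTps]
    simp [Tfs, Matrix.vecHead, Matrix.vecTail]
    positivity
  · rw [hTps, Tis]
    have : 0 ≤ k*ρ/(k*ρ+1) := by positivity
    linarith
  · rw [hTps, Tis]
    constructor
    · intro h
      have h2 : k*ρ/(k*ρ+1) = 0 := by linarith
      have hkρ : k*ρ + 1 ≠ 0 := by positivity
      have := (div_eq_zero_iff.mp h2).resolve_right hkρ
      rcases mul_eq_zero.mp this with h|h
      · exact h
      · exact absurd h hρ.ne'
    · intro h; simp [h]
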